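/- Correctness of the reduction of the 4×4 step-equation system to two 2×2 solves: let P be a symmetric n×n real matrix, H an m×m real matrix, A ∈ ℝᵐˣⁿ, q ∈ ℝⁿ, b ∈ ℝᵐ, τ > 0, κ ∈ ℝ, x ∈ ℝⁿ, and set ξ = x/τ. Suppose (Δx₁, Δz₁) and (Δx₂, Δz₂) satisfy P Δx₁ + Aᵀ Δz₁ = d_x, A Δx₁ − H Δz₁ = −(d_z − d_s) and P Δx₂ + Aᵀ Δz₂ = −q, A Δx₂ − H Δz₂ = b, and suppose D := κ/τ + ξᵀPξ − (2Pξ + q)ᵀ Δx₂ − bᵀ Δz₂ ≠ 0. Define Δτ = (d_τ − d_κ/τ + (2Pξ + q)ᵀ Δx₁ + bᵀ Δz₁)/D, Δx = Δx₁ + Δτ Δx₂, Δz = Δz₁ + Δτ Δz₂, Δs = −d_s − H Δz, and Δκ = −(d_κ + κ Δτ)/τ. Then (Δx, Δz, Δτ, Δs, Δκ) satisfies: P Δx + Aᵀ Δz + q Δτ = d_x; Δs + A Δx − b Δτ = −d_z; Δκ + (q + 2Pξ)ᵀ Δx + bᵀ Δz − (ξᵀPξ) Δτ = −d_τ; H Δz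 + Δs = −d_s; and κ Δτ + τ Δκ = −d_κ. -/

import Mathlib

open Matrix

/-- Correctness of the reduction of the 4×4 step-equation system to two 2×2 solves. -/
theorem step_reduction_correct {n m : ℕ}
    (P : Matrix (Fin n) (Fin n) ℝ) (hP : P.IsSymm)
    (H : Matrix (Fin m) (Fin m) ℝ)
    (A : Matrix (Fin m) (Fin n) ℝ) (q : Fin n → ℝ) (b : Fin m → ℝ)
    (τ κ : ℝ) (hτ : 0 < τ) (x : Fin n → ℝ)
    (ξ : Fin n → ℝ) (hξ : ξ = τ⁻¹ • x)
    (dx : Fin n → ℝ) (dz ds : Fin m → ℝ) (dτ dκ : ℝ)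
    (Δx₁ Δx₂ : Fin n → ℝ) (Δz₁ Δz₂ : Fin m → ℝ)
    (h11 : P *ᵥ Δx₁ + Aᵀ *ᵥ Δz₁ = dx)
    (h12 : A *ᵥ Δx₁ - H *ᵥ Δz₁ = -(dz - ds))
    (h21 : P *ᵥ Δx₂ + Aᵀ *ᵥ Δz₂ = -q)
    (h22 : A *ᵥ Δx₂ - H *ᵥ Δz₂ = b)
    (D : ℝ)
    (hD : D = κ/τ + ξ ⬝ᵥ (P *ᵥ ξ) - ((2:ℝ) • (P *ᵥ ξ) + q) ⬝ᵥ Δx₂ - b ⬝ᵥ Δz₂)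
    (hD0 : D ≠ 0)
    (Δτ : ℝ)
    (hΔτ : Δτ = (dτ - dκ/τ + ((2:ℝ) • (P *ᵥ ξ) + q) ⬝ᵥ Δx₁ + b ⬝ᵥ Δz₁) / D)
    (Δx : Fin n → ℝ) (hΔx : Δx = Δx₁ + Δτ • Δx₂)
    (Δz : Fin m → ℝ) (hΔz : Δz = Δz₁ + Δτ • Δz₂)
    (Δs : Fin m → ℝ) (hΔs : Δs = -ds - H *ᵥ Δz)
    (Δκ : ℝ) (hΔκ : Δκ = -(dκ + κ * Δτ) / τ) :
    P *ᵥ Δx + Aᵀ *ᵥ Δz + Δτ • q = dx ∧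
    Δs + A *ᵥ Δx - Δτ • b = -dz ∧
    Δκ + (q + (2:ℝ) • (P *ᵥ ξ)) ⬝ᵥ Δx + b ⬝ᵥ Δz - (ξ ⬝ᵥ (P *ᵥ ξ)) * Δτ = -dτ ∧
    H *ᵥ Δz + Δs = -ds ∧
    κ * Δτ + τ * Δκ = -dκ := by

  have hτ' : τ ≠ 0 := ne_of_gt hτ
  have hDΔτ : Δτ * D = dτ - dκ/τ + ((2:ℝ) • (P *ᵥ ξ) + q) ⬝ᵥ Δx₁ + b ⬝ᵥ Δz₁ := by
    rw [hΔτ]; field_simp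
  refine ⟨?_, ?_, ?_, ?_, ?_⟩
  · have : P *ᵥ Δx + Aᵀ *ᵥ Δz + Δτ • q
        = (P *ᵥ Δx₁ + Aᵀ *ᵥ Δz₁) + Δτ • (P *ᵥ Δx₂ + Aᵀ *ᵥ Δz₂) + Δτ • q := by
      rw [hΔx, hΔz]; simp [mulVec_add, mulVec_smul, smul_add]; abel
    rw [this, h11, h21]; simp
  · have e : A *ᵥ Δx - H *ᵥ Δz = (A *ᵥ Δx₁ - H *ᵥ Δz₁) + Δτ • (A *ᵥ Δx₂ - H *ᵥ Δz₂) := by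
      rw [hΔx, hΔz, mulVec_add, mulVec_add, mulVec_smul, mulVec_smul]
      rw [smul_sub]; abel
    have e2 : Δs + A *ᵥ Δx - Δτ • b = -ds + (A *ᵥ Δx - H *ᵥ Δz) - Δτ • b := by
      rw [hΔs]; abel
    rw [e2, e, h12, h22]; abel
  · have hdx : (q + (2:ℝ) • (P *ᵥ ξ)) ⬝ᵥ Δx
        = ((2:ℝ) • (P *ᵥ ξ) + q) ⬝ᵥ Δx₁ + Δτ * (((2:ℝ) • (P *ᵥ ξ) + q) ⬝ᵥ Δx₂) := by
      rw [hΔx, add_comm q]; simp [dotProduct_add, dotProduct_smul]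
    have hdz : b ⬝ᵥ Δz = b ⬝ᵥ Δz₁ + Δτ * (b ⬝ᵥ Δz₂) := by
      rw [hΔz]; simp [dotProduct_add, dotProduct_smul]
    rw [hdx, hdz, hΔκ, hD] at *
    field_simp at hDΔτ ⊢
    linarith [hDΔτ]
  · rw [hΔs]; abel
  · rw [hΔκ]; field_simp; ring
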